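/- Entanglement witnesses completely characterize separability of covariance matrices: for a bipartite split N = N_A + N_B, a 2N×2N covariance matrix γ is separable with respect to the split A|B if and only if tr(Z·γ) ≥ 1 for every entanglement witness Z for the split A|B. -/

import Mathlib

open Matrix Polynomial
open ComplexOrder

noncomputable section

/-- The standard symplectic form matrix: block diagonal with 2×2 blocks [[0,1],[-1,0]]. -/
def symplForm (n : ℕ) : Matrix (Fin n) (Fin n) ℝ :=
  Matrix.of fun i j =>
    if (i : ℕ) + 1 = (j : ℕ) ∧ (i : ℕ) % 2 = 0 then 1
    else if (j : ℕ) + 1 = (i : ℕ) ∧ (j : ℕ) % 2 = 0 then -1 else 0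

/-- Membership in the real symplectic group: `S σ Sᵀ = σ`. -/
def IsSymplectic {n : ℕ} (S : Matrix (Fin n) (Fin n) ℝ) : Prop :=
  S * symplForm n * Sᵀ = symplForm n

/-- The Williamson diagonal matrix `diag(a₁,a₁,…,a_N,a_N)`. -/
def WDiag {N : ℕ} (a : Fin N → ℝ) : Matrix (Fin (2 * N)) (Fin (2 * N)) ℝ :=
  Matrix.diagonal fun i => a ⟨(i : ℕ) / 2, by have := i.isLt; omega⟩

/-- A covariance matrix: real symmetric with `γ + iσ` positive semidefinite. -/
def IsCovMatrix {n : ℕ} (γ : Matrix (Fin n) (Fin n) ℝ) : Prop :=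
  γ.IsSymm ∧
    (γ.map (Complex.ofReal) + Complex.I • (symplForm n).map Complex.ofReal).PosSemidef

/-- The block-diagonal direct sum of two square matrices. -/
def dirSum {m n : ℕ} (A : Matrix (Fin m) (Fin m) ℝ) (B : Matrix (Fin n) (Fin n) ℝ) :
    Matrix (Fin (m + n)) (Fin (m + n)) ℝ :=
  Matrix.reindex finSumFinEquiv finSumFinEquiv (Matrix.fromBlocks A 0 0 B)

/-- Separability of a covariance matrix with respect to the split `A|B`. -/
def IsSepCov (nA nB : ℕ) (γ : Matrix (Fin (nA + nB)) (Fin (nA + nB)) ℝ) : Prop :=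
  ∃ (γA : Matrix (Fin nA) (Fin nA) ℝ) (γB : Matrix (Fin nB) (Fin nB) ℝ),
    IsCovMatrix γA ∧ IsCovMatrix γB ∧ (γ - dirSum γA γB).PosSemidef

/-- An entanglement witness for the split `A|B`: a real symmetric matrix `Z` with
`tr(Zγ') ≥ 1` for every separable covariance matrix `γ'`. -/
def IsEntWitness (nA nB : ℕ) (Z : Matrix (Fin (nA + nB)) (Fin (nA + nB)) ℝ) : Prop :=
  Z.IsSymm ∧ ∀ γ' : Matrix (Fin (nA + nB)) (Fin (nA + nB)) ℝ,
    IsCovMatrix γ' → IsSepCov nA nB γ' → 1 ≤ (Z * γ').trace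

/-! ### Auxiliary lemmas -/

section AuxPSD
variable {n : ℕ}

lemma real_psd_quad {A : Matrix (Fin n) (Fin n) ℝ} (hA : A.PosSemidef) (x : Fin n → ℝ) :
    0 ≤ x ⬝ᵥ A *ᵥ x := by simpa using hA.dotProduct_mulVec_nonneg x

lemma real_psd_symm {A : Matrix (Fin n) (Fin n) ℝ} (hA : A.PosSemidef) (i j : Fin n) :
    A j i = A i j := by
  simpa using hA.1.apply i j

lemma real_psd_diag_nonneg {A : Matrix (Fin n) (Fin n) ℝ} (hA : A.PosSemidef) (i : Fin n) :
    0 ≤ A i i := by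
  have := real_psd_quad hA (Pi.single i 1)
  simpa [dotProduct, mulVec, Pi.single_apply, Finset.sum_ite_eq, Finset.sum_ite_eq'] using this

lemma real_psd_entry_bound {A : Matrix (Fin n) (Fin n) ℝ} (hA : A.PosSemidef) {C : ℝ}
    (hC : ∀ k, A k k ≤ C) (i j : Fin n) : |A i j| ≤ C := by
  rcases eq_or_ne i j with rfl | hij
  · rw [abs_of_nonneg (real_psd_diag_nonneg hA i)]; exact hC i
  · have h1 := real_psd_quad hA (Pi.single i 1 + Pi.single j 1)
    have h2 := real_psd_quad hA (Pi.single i 1 - Pi.single j 1)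
    have e1 : ∀ (y z : Fin n → ℝ), (y + z) ⬝ᵥ A *ᵥ (y + z) =
        y ⬝ᵥ A *ᵥ y + y ⬝ᵥ A *ᵥ z + z ⬝ᵥ A *ᵥ y + z ⬝ᵥ A *ᵥ z := by
      intro y z; simp [mulVec_add, dotProduct_add, add_dotProduct]; ring
    have e2 : ∀ (y z : Fin n → ℝ), (y - z) ⬝ᵥ A *ᵥ (y - z) =
        y ⬝ᵥ A *ᵥ y - y ⬝ᵥ A *ᵥ z - z ⬝ᵥ A *ᵥ y + z ⬝ᵥ A *ᵥ z := by
      intro y z; simp [mulVec_sub, dotProduct_sub, sub_dotProduct]; ring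
    have key : ∀ (a b : Fin n), Pi.single a 1 ⬝ᵥ A *ᵥ Pi.single b (1:ℝ) = A a b := by
      intro a b
      simp [dotProduct, mulVec, Pi.single_apply, Finset.sum_ite_eq, Finset.sum_ite_eq',
        Finset.mul_sum]
    rw [e1, key, key, key, key] at h1
    rw [e2, key, key, key, key] at h2
    rw [real_psd_symm hA i j] at h1 h2
    have hii := hC i
    have hjj := hC j
    rw [abs_le]
    constructor <;> nlinarith [real_psd_diag_nonneg hA i, real_psd_diag_nonneg hA j]

lemma real_psd_smul {A : Matrix (Fin n) (Fin n) ℝ} (hA : A.PosSemidef) {t : ℝ} (ht : 0 ≤ t) :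
    (t • A).PosSemidef := by
  refine Matrix.PosSemidef.of_dotProduct_mulVec_nonneg ?_ fun x => ?_
  · have := hA.1
    unfold Matrix.IsHermitian at *
    rw [conjTranspose_smul, this]
    simp
  · rw [smul_mulVec, dotProduct_smul]
    exact smul_nonneg ht (hA.dotProduct_mulVec_nonneg x)

lemma cplx_psd_smul {M : Matrix (Fin n) (Fin n) ℂ} (hM : M.PosSemidef) {t : ℝ} (ht : 0 ≤ t) :
    (t • M).PosSemidef := by
  refine Matrix.PosSemidef.of_dotProduct_mulVec_nonneg ?_ fun x => ?_
  · have := hM.1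
    unfold Matrix.IsHermitian at *
    rw [conjTranspose_smul, this]
    simp
  · rw [smul_mulVec, dotProduct_smul]
    have h0 : (0:ℂ) ≤ (t:ℂ) := by exact_mod_cast Complex.zero_le_real.2 ht
    calc (0:ℂ) = (t:ℂ) * 0 := by ring
    _ ≤ (t:ℂ) * (star x ⬝ᵥ M *ᵥ x) := by
        apply mul_le_mul_of_nonneg_left (hM.dotProduct_mulVec_nonneg x) h0
    _ = t • (star x ⬝ᵥ M *ᵥ x) := by rw [Complex.real_smul]

lemma conjT_map_ofReal (B : Matrix (Fin n) (Fin n) ℝ) :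
    (B.map Complex.ofReal)ᴴ = Bᵀ.map Complex.ofReal := by
  ext i j
  simp [conjTranspose_apply, Matrix.map_apply]

lemma map_ofReal_psd {A : Matrix (Fin n) (Fin n) ℝ} (hA : A.PosSemidef) :
    (A.map Complex.ofReal).PosSemidef := by
  obtain ⟨m, v, rfl⟩ := Matrix.posSemidef_iff_eq_sum_vecMulVec.mp hA
  have : (∑ i, vecMulVec (v i) (star (v i))).map Complex.ofReal =
      ∑ i, vecMulVec (fun k => (v i k : ℂ)) (star (fun k => (v i k : ℂ))) := by
    ext a b; simp [Matrix.sum_apply, vecMulVec_apply]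
  rw [this]
  exact Matrix.posSemidef_sum _ fun i _ => Matrix.posSemidef_vecMulVec_self_star _

lemma real_quad_cast (A : Matrix (Fin n) (Fin n) ℝ) (x : Fin n → ℝ) :
    star (fun k => (x k : ℂ)) ⬝ᵥ (A.map Complex.ofReal) *ᵥ (fun k => (x k : ℂ)) =
      ((x ⬝ᵥ A *ᵥ x : ℝ) : ℂ) := by
  simp only [dotProduct, mulVec, Matrix.map_apply, Pi.star_apply, Complex.star_def,
    Complex.conj_ofReal]
  push_cast
  ring_nf

lemma real_isHermitian_of_isSymm {A : Matrix (Fin n) (Fin n) ℝ} (h : A.IsSymm) :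
    A.IsHermitian := by
  have : Aᴴ = Aᵀ := by ext i j; simp [conjTranspose_apply]
  unfold Matrix.IsHermitian
  rw [this]; exact h

lemma cov_psd {γ : Matrix (Fin n) (Fin n) ℝ} (hγ : IsCovMatrix γ) : γ.PosSemidef := by
  refine Matrix.PosSemidef.of_dotProduct_mulVec_nonneg (real_isHermitian_of_isSymm hγ.1) fun x => ?_
  have h := hγ.2.dotProduct_mulVec_nonneg (fun k => (x k : ℂ))
  rw [add_mulVec, dotProduct_add, real_quad_cast, smul_mulVec, dotProduct_smul,
    real_quad_cast] at h
  have hre := (Complex.le_def.mp h).1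
  simpa using hre

lemma smul_map_ofReal (t : ℝ) (A : Matrix (Fin n) (Fin n) ℝ) :
    (t • A).map Complex.ofReal = t • A.map Complex.ofReal := by
  ext i j
  simp [Matrix.map_apply, Complex.real_smul]

lemma add_map_ofReal (A B : Matrix (Fin n) (Fin n) ℝ) :
    (A + B).map Complex.ofReal = A.map Complex.ofReal + B.map Complex.ofReal := by
  ext i j; simp [Matrix.map_apply]

lemma isSymm_comb {A B : Matrix (Fin n) (Fin n) ℝ} (h1 : A.IsSymm) (h2 : B.IsSymm) (t s : ℝ) :
    (t • A + s • B).IsSymm := by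
  unfold Matrix.IsSymm at *
  rw [transpose_add, transpose_smul, transpose_smul, h1, h2]

lemma cov_comb {γ₁ γ₂ : Matrix (Fin n) (Fin n) ℝ} (h1 : IsCovMatrix γ₁) (h2 : IsCovMatrix γ₂)
    {t s : ℝ} (ht : 0 ≤ t) (hs : 0 ≤ s) (hts : t + s = 1) :
    IsCovMatrix (t • γ₁ + s • γ₂) := by
  refine ⟨isSymm_comb h1.1 h2.1 t s, ?_⟩
  set σm := (symplForm n).map Complex.ofReal
  have key : (t • γ₁ + s • γ₂).map Complex.ofReal + Complex.I • σm =
      t • (γ₁.map Complex.ofReal + Complex.I • σm) +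
        s • (γ₂.map Complex.ofReal + Complex.I • σm) := by
    have h3 : t • (Complex.I • σm) + s • (Complex.I • σm) = Complex.I • σm := by
      rw [← add_smul, hts, one_smul]
    rw [add_map_ofReal, smul_map_ofReal, smul_map_ofReal, smul_add, smul_add]
    conv_lhs => rw [← h3]
    abel
  rw [key]
  exact Matrix.PosSemidef.add (cplx_psd_smul h1.2 ht) (cplx_psd_smul h2.2 hs)

lemma cov_add_smul {γ₀ γ : Matrix (Fin n) (Fin n) ℝ} (h0 : IsCovMatrix γ₀) (h : IsCovMatrix γ)
    {t : ℝ} (ht : 0 ≤ t) : IsCovMatrix (γ₀ + t • γ) := by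
  refine ⟨?_, ?_⟩
  · have := isSymm_comb h0.1 h.1 1 t
    simpa using this
  · have key : (γ₀ + t • γ).map Complex.ofReal + Complex.I • (symplForm n).map Complex.ofReal =
        (γ₀.map Complex.ofReal + Complex.I • (symplForm n).map Complex.ofReal) +
          t • γ.map Complex.ofReal := by
      rw [add_map_ofReal, smul_map_ofReal]
      abel
    rw [key]
    exact Matrix.PosSemidef.add h0.2 (cplx_psd_smul (map_ofReal_psd (cov_psd h)) ht)

end AuxPSD

section AuxDirSum
variable {m n : ℕ}

lemma dirSum_apply (A : Matrix (Fin m) (Fin m) ℝ) (B : Matrix (Fin n) (Fin n) ℝ)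
    (k l : Fin (m + n)) :
    dirSum A B k l = Matrix.fromBlocks A 0 0 B (finSumFinEquiv.symm k) (finSumFinEquiv.symm l) :=
  rfl

lemma dirSum_comb (A₁ A₂ : Matrix (Fin m) (Fin m) ℝ) (B₁ B₂ : Matrix (Fin n) (Fin n) ℝ)
    (t s : ℝ) :
    dirSum (t • A₁ + s • A₂) (t • B₁ + s • B₂) = t • dirSum A₁ B₁ + s • dirSum A₂ B₂ := by
  ext k l
  rcases hk : finSumFinEquiv.symm k with i | i <;> rcases hl : finSumFinEquiv.symm l with j | j <;>
    simp [dirSum_apply, hk, hl, Matrix.fromBlocks]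

lemma dirSum_diag_inl (A : Matrix (Fin m) (Fin m) ℝ) (B : Matrix (Fin n) (Fin n) ℝ) (i : Fin m) :
    dirSum A B (finSumFinEquiv (Sum.inl i)) (finSumFinEquiv (Sum.inl i)) = A i i := by
  simp [dirSum_apply]

lemma dirSum_diag_inr (A : Matrix (Fin m) (Fin m) ℝ) (B : Matrix (Fin n) (Fin n) ℝ) (i : Fin n) :
    dirSum A B (finSumFinEquiv (Sum.inr i)) (finSumFinEquiv (Sum.inr i)) = B i i := by
  simp [dirSum_apply]

lemma trace_rep (f : Matrix (Fin n) (Fin n) ℝ →L[ℝ] ℝ) (M : Matrix (Fin n) (Fin n) ℝ) :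
    ((Matrix.of fun i j => f (single j i 1)) * M).trace = f M := by
  conv_rhs => rw [matrix_eq_sum_single M]
  rw [map_sum]
  simp only [map_sum]
  have : ∀ i j, (single i j (M i j) : Matrix (Fin n) (Fin n) ℝ)
      = M i j • single i j 1 := by
    intro i j; rw [smul_single, smul_eq_mul, mul_one]
  simp only [this]
  simp only [Matrix.trace, Matrix.diag, Matrix.mul_apply, Matrix.of_apply]
  rw [Finset.sum_comm]
  refine Finset.sum_congr rfl fun i _ => Finset.sum_congr rfl fun j _ => ?_
  rw [_root_.map_smul, smul_eq_mul, mul_comm]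

lemma trace_transpose_mul_symm (L M : Matrix (Fin n) (Fin n) ℝ) (hM : M.IsSymm) :
    (Lᵀ * M).trace = (L * M).trace := by
  have : (Lᵀ * M).trace = ((Lᵀ * M)ᵀ).trace := (Matrix.trace_transpose _).symm
  rw [this, Matrix.transpose_mul, Matrix.transpose_transpose, hM.eq, Matrix.trace_mul_comm]

end AuxDirSum

section AuxTopo
variable {m n : ℕ}

lemma isClosed_nonneg_complex : IsClosed {z : ℂ | 0 ≤ z} := by
  have : {z : ℂ | 0 ≤ z} = Complex.re ⁻¹' Set.Ici 0 ∩ Complex.im ⁻¹' {0} := by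
    ext z; simp [Complex.le_def, eq_comm]
  rw [this]
  exact (isClosed_Ici.preimage Complex.continuous_re).inter
    (isClosed_singleton.preimage Complex.continuous_im)

lemma isClosed_psd_complex : IsClosed {M : Matrix (Fin n) (Fin n) ℂ | M.PosSemidef} := by
  have : {M : Matrix (Fin n) (Fin n) ℂ | M.PosSemidef} =
      {M : Matrix (Fin n) (Fin n) ℂ | Mᴴ = M} ∩
        ⋂ x : Fin n → ℂ, {M | 0 ≤ star x ⬝ᵥ M *ᵥ x} := by
    ext M
    simp only [Set.mem_setOf_eq, Set.mem_inter_iff, Set.mem_iInter]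
    exact Matrix.posSemidef_iff_dotProduct_mulVec
  rw [this]
  refine IsClosed.inter ?_ (isClosed_iInter fun x => ?_)
  · exact isClosed_eq (continuous_id.matrix_conjTranspose) continuous_id
  · exact isClosed_nonneg_complex.preimage
      (continuous_const.dotProduct (continuous_id.matrix_mulVec continuous_const))

lemma isClosed_psd_real : IsClosed {M : Matrix (Fin n) (Fin n) ℝ | M.PosSemidef} := by
  have : {M : Matrix (Fin n) (Fin n) ℝ | M.PosSemidef} =
      {M : Matrix (Fin n) (Fin n) ℝ | Mᴴ = M} ∩
        ⋂ x : Fin n → ℝ, {M | 0 ≤ star x ⬝ᵥ M *ᵥ x} := by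
    ext M
    simp only [Set.mem_setOf_eq, Set.mem_inter_iff, Set.mem_iInter]
    exact Matrix.posSemidef_iff_dotProduct_mulVec
  rw [this]
  refine IsClosed.inter ?_ (isClosed_iInter fun x => ?_)
  · exact isClosed_eq (continuous_id.matrix_conjTranspose) continuous_id
  · exact (isClosed_Ici (a := (0:ℝ))).preimage
      (continuous_const.dotProduct (continuous_id.matrix_mulVec continuous_const))

lemma isClosed_cov : IsClosed {M : Matrix (Fin n) (Fin n) ℝ | IsCovMatrix M} := by
  have : {M : Matrix (Fin n) (Fin n) ℝ | IsCovMatrix M} =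
      {M : Matrix (Fin n) (Fin n) ℝ | Mᵀ = M} ∩
        ((fun M : Matrix (Fin n) (Fin n) ℝ =>
            M.map Complex.ofReal + Complex.I • (symplForm n).map Complex.ofReal) ⁻¹'
          {M : Matrix (Fin n) (Fin n) ℂ | M.PosSemidef}) := by
    ext M; exact Iff.rfl
  rw [this]
  refine IsClosed.inter (isClosed_eq (continuous_id.matrix_transpose) continuous_id) ?_
  exact isClosed_psd_complex.preimage
    ((continuous_id.matrix_map Complex.continuous_ofReal).add continuous_const)

lemma continuous_dirSum :
    Continuous (fun p : Matrix (Fin m) (Fin m) ℝ × Matrix (Fin n) (Fin n) ℝ =>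
      dirSum p.1 p.2) := by
  apply continuous_matrix
  intro k l
  show Continuous fun p : _ × _ =>
    Matrix.fromBlocks p.1 0 0 p.2 (finSumFinEquiv.symm k) (finSumFinEquiv.symm l)
  rcases hk : finSumFinEquiv.symm k with i | i <;> rcases hl : finSumFinEquiv.symm l with j | j <;>
    simp [Matrix.fromBlocks] <;>
    first
      | exact (continuous_fst.matrix_elem _ _)
      | exact (continuous_snd.matrix_elem _ _)
      | exact continuous_const

end AuxTopo

section SepClosed
attribute [local instance] Matrix.normedAddCommGroup Matrix.normedSpace

lemma isClosed_sep (nA nB : ℕ) :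
    IsClosed {g : Matrix (Fin (nA + nB)) (Fin (nA + nB)) ℝ | IsSepCov nA nB g} := by
  refine isClosed_of_closure_subset ?_
  intro g hg
  set r : ℝ := ‖g‖ + 1 with hrdef
  have hr0 : (0:ℝ) ≤ r := by positivity
  set T : Set (Matrix (Fin nA) (Fin nA) ℝ × Matrix (Fin nB) (Fin nB) ℝ ×
      Matrix (Fin (nA + nB)) (Fin (nA + nB)) ℝ) :=
    {p | IsCovMatrix p.1 ∧ IsCovMatrix p.2.1 ∧ (p.2.2 - dirSum p.1 p.2.1).PosSemidef ∧
      ‖p.1‖ ≤ r ∧ ‖p.2.1‖ ≤ r ∧ ‖p.2.2‖ ≤ r} with hTdef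
  have hTclosed : IsClosed T := by
    have h1 := isClosed_cov.preimage (continuous_fst :
      Continuous fun p : Matrix (Fin nA) (Fin nA) ℝ × Matrix (Fin nB) (Fin nB) ℝ ×
        Matrix (Fin (nA + nB)) (Fin (nA + nB)) ℝ => p.1)
    have h2 := isClosed_cov.preimage (continuous_snd.fst :
      Continuous fun p : Matrix (Fin nA) (Fin nA) ℝ × Matrix (Fin nB) (Fin nB) ℝ ×
        Matrix (Fin (nA + nB)) (Fin (nA + nB)) ℝ => p.2.1)
    have h3 := isClosed_psd_real.preimage
      ((continuous_snd.snd).sub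
        (continuous_dirSum.comp (continuous_fst.prodMk continuous_snd.fst)) :
      Continuous fun p : Matrix (Fin nA) (Fin nA) ℝ × Matrix (Fin nB) (Fin nB) ℝ ×
        Matrix (Fin (nA + nB)) (Fin (nA + nB)) ℝ => p.2.2 - dirSum p.1 p.2.1)
    have h4 := isClosed_le (continuous_fst.norm :
      Continuous fun p : Matrix (Fin nA) (Fin nA) ℝ × Matrix (Fin nB) (Fin nB) ℝ ×
        Matrix (Fin (nA + nB)) (Fin (nA + nB)) ℝ => ‖p.1‖) (continuous_const (y := r))
    have h5 := isClosed_le (continuous_snd.fst.norm :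
      Continuous fun p : Matrix (Fin nA) (Fin nA) ℝ × Matrix (Fin nB) (Fin nB) ℝ ×
        Matrix (Fin (nA + nB)) (Fin (nA + nB)) ℝ => ‖p.2.1‖) (continuous_const (y := r))
    have h6 := isClosed_le (continuous_snd.snd.norm :
      Continuous fun p : Matrix (Fin nA) (Fin nA) ℝ × Matrix (Fin nB) (Fin nB) ℝ ×
        Matrix (Fin (nA + nB)) (Fin (nA + nB)) ℝ => ‖p.2.2‖) (continuous_const (y := r))
    exact h1.inter (h2.inter (h3.inter (h4.inter (h5.inter h6))))
  have hTcompact : IsCompact T := by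
    have hK : IsCompact (Metric.closedBall (0 : Matrix (Fin nA) (Fin nA) ℝ) r ×ˢ
        (Metric.closedBall (0 : Matrix (Fin nB) (Fin nB) ℝ) r ×ˢ
          Metric.closedBall (0 : Matrix (Fin (nA + nB)) (Fin (nA + nB)) ℝ) r)) :=
      (isCompact_closedBall _ _).prod ((isCompact_closedBall _ _).prod
        (isCompact_closedBall _ _))
    refine hK.of_isClosed_subset hTclosed ?_
    intro p hp
    exact ⟨mem_closedBall_zero_iff.mpr hp.2.2.2.1,
      mem_closedBall_zero_iff.mpr hp.2.2.2.2.1,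
      mem_closedBall_zero_iff.mpr hp.2.2.2.2.2⟩
  have himage : IsClosed ((fun p : Matrix (Fin nA) (Fin nA) ℝ × Matrix (Fin nB) (Fin nB) ℝ ×
      Matrix (Fin (nA + nB)) (Fin (nA + nB)) ℝ => p.2.2) '' T) :=
    (hTcompact.image continuous_snd.snd).isClosed
  have hsub : {h : Matrix (Fin (nA + nB)) (Fin (nA + nB)) ℝ | IsSepCov nA nB h} ∩
      Metric.ball g 1 ⊆ (fun p : Matrix (Fin nA) (Fin nA) ℝ × Matrix (Fin nB) (Fin nB) ℝ ×
      Matrix (Fin (nA + nB)) (Fin (nA + nB)) ℝ => p.2.2) '' T := by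
    rintro h ⟨⟨A, B, hA, hB, hpsd⟩, hball⟩
    have hhnorm : ‖h‖ ≤ r := by
      have : ‖h - g‖ < 1 := by
        rw [← dist_eq_norm]; exact Metric.mem_ball.mp hball
      have h2 := norm_sub_norm_le h g
      rw [hrdef]; linarith
    have hentry : ∀ k, h k k ≤ r := fun k =>
      le_trans (le_trans (le_abs_self _) (by
        simpa [Real.norm_eq_abs] using Matrix.norm_entry_le_entrywise_sup_norm h (i := k) (j := k)))
        hhnorm
    have hAdiag : ∀ i, A i i ≤ r := by
      intro i
      have h0 := real_psd_diag_nonneg hpsd (finSumFinEquiv (Sum.inl i))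
      rw [Matrix.sub_apply, dirSum_diag_inl] at h0
      have := hentry (finSumFinEquiv (Sum.inl i))
      linarith
    have hBdiag : ∀ i, B i i ≤ r := by
      intro i
      have h0 := real_psd_diag_nonneg hpsd (finSumFinEquiv (Sum.inr i))
      rw [Matrix.sub_apply, dirSum_diag_inr] at h0
      have := hentry (finSumFinEquiv (Sum.inr i))
      linarith
    refine ⟨(A, B, h), ⟨hA, hB, hpsd, ?_, ?_, hhnorm⟩, rfl⟩
    · rw [Matrix.norm_le_iff hr0]
      intro i j
      simpa [Real.norm_eq_abs] using real_psd_entry_bound (cov_psd hA) hAdiag i j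
    · rw [Matrix.norm_le_iff hr0]
      intro i j
      simpa [Real.norm_eq_abs] using real_psd_entry_bound (cov_psd hB) hBdiag i j
  have hgmem : g ∈ closure ({h : Matrix (Fin (nA + nB)) (Fin (nA + nB)) ℝ | IsSepCov nA nB h} ∩
      Metric.ball g 1) := by
    rw [mem_closure_iff] at hg ⊢
    intro o ho hgo
    obtain ⟨y, ⟨hyo, hyb⟩, hysep⟩ := hg (o ∩ Metric.ball g 1) (ho.inter Metric.isOpen_ball)
      ⟨hgo, Metric.mem_ball_self one_pos⟩
    exact ⟨y, hyo, hysep, hyb⟩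
  have hmem2 := closure_mono hsub hgmem
  rw [himage.closure_eq] at hmem2
  obtain ⟨p, hpT, hpg⟩ := hmem2
  exact ⟨p.1, p.2.1, hpT.1, hpT.2.1, by rw [← hpg] at *; exact hpT.2.2.1⟩

/-- Entanglement witnesses completely characterize separability of covariance matrices. -/
theorem witnesses_characterize_separability (NA NB : ℕ) (hNA : 1 ≤ NA) (hNB : 1 ≤ NB)
    (γ : Matrix (Fin (2 * NA + 2 * NB)) (Fin (2 * NA + 2 * NB)) ℝ) (hγ : IsCovMatrix γ) :
    IsSepCov (2 * NA) (2 * NB) γ ↔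
      ∀ Z : Matrix (Fin (2 * NA + 2 * NB)) (Fin (2 * NA + 2 * NB)) ℝ,
        IsEntWitness (2 * NA) (2 * NB) Z → 1 ≤ (Z * γ).trace := by
  constructor
  · intro hsep Z hZ
    exact hZ.2 γ hγ hsep
  · intro hw
    by_contra hns
    set S : Set (Matrix (Fin (2 * NA + 2 * NB)) (Fin (2 * NA + 2 * NB)) ℝ) :=
      {g | IsCovMatrix g ∧ IsSepCov (2 * NA) (2 * NB) g} with hSdef
    by_cases hne : S.Nonempty
    swap
    · have hwit0 : IsEntWitness (2 * NA) (2 * NB) 0 := by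
        refine ⟨by unfold Matrix.IsSymm; simp, fun γ' hc hs => absurd ⟨γ', hc, hs⟩ hne⟩
      have h10 := hw 0 hwit0
      rw [Matrix.zero_mul, Matrix.trace_zero] at h10
      linarith
    · obtain ⟨g₀, hg₀⟩ := hne
      have hSconv : Convex ℝ S := by
        intro x hx y hy a b ha hb hab
        refine ⟨cov_comb hx.1 hy.1 ha hb hab, ?_⟩
        obtain ⟨Ax, Bx, hAx, hBx, hPx⟩ := hx.2
        obtain ⟨Ay, By, hAy, hBy, hPy⟩ := hy.2
        refine ⟨a • Ax + b • Ay, a • Bx + b • By, cov_comb hAx hAy ha hb hab,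
          cov_comb hBx hBy ha hb hab, ?_⟩
        rw [dirSum_comb]
        have heq : (a • x + b • y) - (a • dirSum Ax Bx + b • dirSum Ay By) =
            a • (x - dirSum Ax Bx) + b • (y - dirSum Ay By) := by
          rw [smul_sub, smul_sub]; abel
        rw [heq]
        exact Matrix.PosSemidef.add (real_psd_smul hPx ha) (real_psd_smul hPy hb)
      have hSclosed : IsClosed S := by
        have : S = {g : Matrix (Fin (2 * NA + 2 * NB)) (Fin (2 * NA + 2 * NB)) ℝ | IsCovMatrix g}
            ∩ {g | IsSepCov (2 * NA) (2 * NB) g} := rfl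
        rw [this]
        exact isClosed_cov.inter (isClosed_sep _ _)
      have hγS : γ ∉ S := fun hmem => hns hmem.2
      haveI : LocallyConvexSpace ℝ (Matrix (Fin (2 * NA + 2 * NB)) (Fin (2 * NA + 2 * NB)) ℝ) :=
        NormedSpace.toLocallyConvexSpace
      obtain ⟨f, u, hfu, hufγ⟩ := geometric_hahn_banach_closed_point hSconv hSclosed hγS
      set c : ℝ := -u with hc
      have hlb : ∀ g ∈ S, c < (-f) g := by
        intro g hgS
        have := hfu g hgS
        simp only [ContinuousLinearMap.neg_apply, hc]
        linarith
      have hγlt : (-f) γ < c := by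
        simp only [ContinuousLinearMap.neg_apply, hc]
        linarith
      have hdir : ∀ t : ℝ, 0 ≤ t → g₀ + t • γ ∈ S := by
        intro t ht
        refine ⟨cov_add_smul hg₀.1 hγ ht, ?_⟩
        obtain ⟨A, B, hA, hB, hP⟩ := hg₀.2
        refine ⟨A, B, hA, hB, ?_⟩
        have heq : (g₀ + t • γ) - dirSum A B = (g₀ - dirSum A B) + t • γ := by abel
        rw [heq]
        exact Matrix.PosSemidef.add hP (real_psd_smul (cov_psd hγ) ht)
      have hγ0 : 0 ≤ (-f) γ := by
        by_contra hneg
        push_neg at hneg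
        set t : ℝ := ((-f) g₀ - c + 1) / (-(-f) γ) with htdef
        have hg₀lb := hlb g₀ hg₀
        have htpos : 0 ≤ t := by
          apply div_nonneg <;> linarith
        have hmem := hlb _ (hdir t htpos)
        rw [map_add, _root_.map_smul, smul_eq_mul] at hmem
        have hmul : t * (-f) γ = -((-f) g₀ - c + 1) := by
          rw [htdef, div_mul_eq_mul_div]
          rw [div_eq_iff (by linarith : -(-f) γ ≠ 0)]
          ring
        linarith
      have hcpos : 0 < c := lt_of_le_of_lt hγ0 hγlt
      set L : Matrix (Fin (2 * NA + 2 * NB)) (Fin (2 * NA + 2 * NB)) ℝ :=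
        Matrix.of fun i j => (-f) (single j i (1:ℝ)) with hL
      set Z : Matrix (Fin (2 * NA + 2 * NB)) (Fin (2 * NA + 2 * NB)) ℝ :=
        c⁻¹ • ((1:ℝ)/2) • (L + Lᵀ) with hZ
      have htr : ∀ M : Matrix (Fin (2 * NA + 2 * NB)) (Fin (2 * NA + 2 * NB)) ℝ,
          M.IsSymm → (Z * M).trace = c⁻¹ * ((-f) M) := by
        intro M hM
        have h1 : (L * M).trace = (-f) M := trace_rep (-f) M
        have h2 : (Lᵀ * M).trace = (-f) M := by
          rw [trace_transpose_mul_symm L M hM, h1]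
        rw [hZ, Matrix.smul_mul, Matrix.smul_mul, Matrix.trace_smul, Matrix.trace_smul,
          Matrix.add_mul, Matrix.trace_add, h1, h2, smul_eq_mul, smul_eq_mul]
        ring
      have hZwit : IsEntWitness (2 * NA) (2 * NB) Z := by
        constructor
        · unfold Matrix.IsSymm
          rw [hZ, transpose_smul, transpose_smul, transpose_add, transpose_transpose, add_comm Lᵀ L]
        · intro γ' hc' hs'
          rw [htr γ' hc'.1]
          have hγ'lb := hlb γ' ⟨hc', hs'⟩
          calc (1:ℝ) = c⁻¹ * c := by field_simp
          _ ≤ c⁻¹ * ((-f) γ') := by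
            apply mul_le_mul_of_nonneg_left (le_of_lt hγ'lb)
            positivity
      have hfin := hw Z hZwit
      rw [htr γ hγ.1] at hfin
      have hlt : c⁻¹ * ((-f) γ) < c⁻¹ * c :=
        mul_lt_mul_of_pos_left hγlt (inv_pos.mpr hcpos)
      rw [inv_mul_cancel₀ (ne_of_gt hcpos)] at hlt
      linarith

end SepClosed
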